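/- Let f, g_1, …, g_n : [0, ∞) → ℝ be continuous functions such that for every i the function t ↦ f(t) − g_i(t) is strictly increasing on [0, ∞). Then the counting function N(t) = #{1 ≤ i ≤ n : g_i(t) ≥ f(t)} is nonincreasing in t, and consequently for every integer m the set {t ∈ [0, ∞) : N(t) ≥ m} is an initial segment of [0, ∞) (hence an interval, possibly empty). -/

import Mathlib

open scoped BigOperators

noncomputable section

/-- monotonicity of the rank counting function.  If `f, g₁, …, g_n` are continuous
on `[0,∞)` and each `t ↦ f(t) − gᵢ(t)` is strictly increasing on `[0,∞)`, then
`N(t) = #{i : gᵢ(t) ≥ f(t)}` is nonincreasing on `[0,∞)`, and for every integer `m` the set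
`{t ∈ [0,∞) : N(t) ≥ m}` is an initial segment of `[0,∞)` (hence an interval, possibly
empty). -/
theorem counting_function_antitone {n : ℕ} (f : ℝ → ℝ) (g : Fin n → ℝ → ℝ)
    (hf : ContinuousOn f (Set.Ici 0)) (hg : ∀ i, ContinuousOn (g i) (Set.Ici 0))
    (hmono : ∀ i, StrictMonoOn (fun t => f t - g i t) (Set.Ici 0)) :
    (∀ s t : ℝ, 0 ≤ s → s ≤ t →
      (Finset.univ.filter fun i : Fin n => f t ≤ g i t).card ≤
        (Finset.univ.filter fun i : Fin n => f s ≤ g i s).card) ∧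
    (∀ m : ℤ, ∀ t ∈ {u : ℝ | u ∈ Set.Ici (0 : ℝ) ∧
        m ≤ ((Finset.univ.filter fun i : Fin n => f u ≤ g i u).card : ℤ)},
      ∀ s : ℝ, 0 ≤ s → s ≤ t →
        s ∈ {u : ℝ | u ∈ Set.Ici (0 : ℝ) ∧
          m ≤ ((Finset.univ.filter fun i : Fin n => f u ≤ g i u).card : ℤ)}) := by
  have key : ∀ s t : ℝ, 0 ≤ s → s ≤ t →
      (Finset.univ.filter fun i : Fin n => f t ≤ g i t).card ≤
        (Finset.univ.filter fun i : Fin n => f s ≤ g i s).card := by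
    intro s t hs hst
    apply Finset.card_le_card
    intro i hi
    simp only [Finset.mem_filter, Finset.mem_univ, true_and] at hi ⊢
    have := (hmono i).monotoneOn hs (hs.trans hst) hst
    have this : f s - g i s ≤ f t - g i t := this
    linarith
  refine ⟨key, ?_⟩
  rintro m t ⟨ht, hm⟩ s hs hst
  exact ⟨hs, hm.trans (by exact_mod_cast key s t hs hst)⟩
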